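/- For all integers r, s and k, H(s)·G(k+r) + (−1)^{r−1}·H(s−r)·G(k) = F(r)·(G(0)·H(k+s−1) + G(1)·H(k+s)). -/

import Mathlib

private lemma intPairInd {P : ℤ → Prop} (h0 : P 0) (h1 : P 1)
    (hup : ∀ n : ℤ, P n → P (n + 1) → P (n + 2))
    (hdn : ∀ n : ℤ, P n → P (n + 1) → P (n - 1)) : ∀ n : ℤ, P n := by
  have key : ∀ n : ℤ, P n ∧ P (n + 1) := by
    intro n
    induction n using Int.induction_on with
    | zero => exact ⟨h0, h1⟩
    | succ k ih =>
        refine ⟨ih.2, ?_⟩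
        have := hup k ih.1 ih.2
        have e : (k : ℤ) + 1 + 1 = k + 2 := by ring
        rwa [e]
    | pred k ih =>
        have hd := hdn (-(k:ℤ)) ih.1 ih.2
        refine ⟨hd, ?_⟩
        have e : (-(k:ℤ) - 1 + 1) = -(k:ℤ) := by ring
        rw [e]; exact ih.1
  exact fun n => (key n).1

private lemma fibAdd (f : ℤ → ℝ) (h0 : f 0 = 0) (h1 : f 1 = 1)
    (hrec : ∀ n : ℤ, f n = f (n - 1) + f (n - 2)) :
    ∀ b a : ℤ, f (a + b) = f a * f (b + 1) + f (a - 1) * f b := by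
  have rec' : ∀ n : ℤ, f (n + 2) = f (n + 1) + f n := by
    intro n
    have := hrec (n + 2)
    rw [show n + 2 - 1 = n + 1 by ring, show n + 2 - 2 = n by ring] at this
    exact this
  refine intPairInd ?_ ?_ ?_ ?_
  · intro a; simp [h0, h1]
  · intro a
    have h2 : f 2 = 1 := by
      have := rec' 0; simp [h0, h1] at this; simpa using this
    have ha : f (a + 1) = f a + f (a - 1) := by
      have := rec' (a - 1)
      rw [show a - 1 + 2 = a + 1 by ring, show a - 1 + 1 = a by ring] at this
      exact this
    rw [ha, h1, show (1:ℤ) + 1 = 2 by ring, h2]; ring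
  · intro b ih1 ih2 a
    have e1 : f (a + (b + 2)) = f (a + (b + 1)) + f (a + b) := by
      have := rec' (a + b)
      rw [show a + b + 2 = a + (b + 2) by ring, show a + b + 1 = a + (b + 1) by ring] at this
      exact this
    have e2 := ih1 a
    have e3 := ih2 a
    have e4 : f (b + 2 + 1) = f (b + 2) + f (b + 1) := by
      have := rec' (b + 1)
      rw [show b + 1 + 2 = b + 2 + 1 by ring, show b + 1 + 1 = b + 2 by ring] at this
      exact this
    have e5 : f (b + 2) = f (b + 1) + f b := rec' b
    have e6 : f (b + 1 + 1) = f (b + 2) := by rw [show b + 1 + 1 = b + 2 by ring]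
    linear_combination e1 + e2 + e3 - f a * e4 + f a * e6 - f (a - 1) * e5
  · intro b ih1 ih2 a
    have e1 : f (a + (b + 1)) = f (a + b) + f (a + (b - 1)) := by
      have := rec' (a + (b - 1))
      rw [show a + (b - 1) + 2 = a + (b + 1) by ring, show a + (b - 1) + 1 = a + b by ring] at this
      exact this
    have e2 := ih1 a
    have e3 := ih2 a
    have e4 : f (b + 1) = f b + f (b - 1) := by
      have := rec' (b - 1)
      rw [show b - 1 + 2 = b + 1 by ring, show b - 1 + 1 = b by ring] at this
      exact this
    have e5 : f (b - 1 + 1) = f b := by rw [show b - 1 + 1 = b by ring]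
    have e6 : f (b + 1 + 1) = f (b + 1) + f b := by
      have := rec' b
      rw [show b + 2 = b + 1 + 1 by ring] at this
      exact this
    linear_combination -e1 - e2 + e3 + f a * (e6 - e5) + f (a - 1) * e4

private lemma fibVajda (f : ℤ → ℝ) (h0 : f 0 = 0) (h1 : f 1 = 1)
    (hrec : ∀ n : ℤ, f n = f (n - 1) + f (n - 2)) :
    ∀ r a b : ℤ, f a * f (b + r) + (-1 : ℝ) ^ (r - 1) * f (a - r) * f b
      = f r * f (a + b) := by
  have rec' : ∀ n : ℤ, f (n + 2) = f (n + 1) + f n := by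
    intro n
    have := hrec (n + 2)
    rw [show n + 2 - 1 = n + 1 by ring, show n + 2 - 2 = n by ring] at this
    exact this
  have hsign : ∀ n : ℤ, (-1 : ℝ) ^ (n + 1) = -((-1 : ℝ) ^ n) := by
    intro n
    rw [zpow_add_one₀ (by norm_num : (-1:ℝ) ≠ 0)]
    ring
  refine intPairInd ?_ ?_ ?_ ?_
  · intro a b
    have e : ((-1 : ℝ)) ^ ((0:ℤ) - 1) = -1 := by norm_num
    rw [e]
    have e2 : f (b + 0) = f b := by norm_num
    have e3 : f (a - 0) = f a := by norm_num
    rw [e2, e3, h0]; ring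
  · intro a b
    have e : ((-1 : ℝ)) ^ ((1:ℤ) - 1) = 1 := by norm_num
    rw [e, h1]
    have := fibAdd f h0 h1 hrec b a
    linear_combination -this
  · intro r ih1 ih2 a b
    have hs1 : ((-1:ℝ)) ^ (r + 1 - 1) = -((-1:ℝ)) ^ (r - 1) := by
      rw [show r + 1 - 1 = (r - 1) + 1 by ring, hsign]
    have hs2 : ((-1:ℝ)) ^ (r + 2 - 1) = ((-1:ℝ)) ^ (r - 1) := by
      rw [show r + 2 - 1 = ((r - 1) + 1) + 1 by ring, hsign, hsign]; ring
    rw [hs2]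
    have i2 := ih2 a b
    rw [hs1] at i2
    have i1 := ih1 a b
    have eb : f (b + (r + 2)) = f (b + (r + 1)) + f (b + r) := by
      have := rec' (b + r)
      rw [show b + r + 2 = b + (r + 2) by ring, show b + r + 1 = b + (r + 1) by ring] at this
      exact this
    have ea : f (a - r) = f (a - (r + 1)) + f (a - (r + 2)) := by
      have := rec' (a - (r + 2))
      rw [show a - (r + 2) + 2 = a - r by ring, show a - (r + 2) + 1 = a - (r + 1) by ring] at this
      exact this
    have er : f (r + 2) = f (r + 1) + f r := rec' r
    linear_combination i1 + i2 + f a * eb - ((-1:ℝ)) ^ (r - 1) * f b * ea - f (a + b) * er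
  · intro r ih1 ih2 a b
    have hs1 : ((-1:ℝ)) ^ (r + 1 - 1) = -((-1:ℝ)) ^ (r - 1) := by
      rw [show r + 1 - 1 = (r - 1) + 1 by ring, hsign]
    have hs3 : ((-1:ℝ)) ^ (r - 1 - 1) = -((-1:ℝ)) ^ (r - 1) := by
      have := hsign (r - 1 - 1)
      rw [show r - 1 - 1 + 1 = r - 1 by ring] at this
      linear_combination this
    rw [hs3]
    have i2 := ih2 a b
    rw [hs1] at i2
    have i1 := ih1 a b
    have eb : f (b + (r + 1)) = f (b + r) + f (b + (r - 1)) := by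
      have := rec' (b + (r - 1))
      rw [show b + (r - 1) + 2 = b + (r + 1) by ring, show b + (r - 1) + 1 = b + r by ring] at this
      exact this
    have ea : f (a - (r - 1)) = f (a - r) + f (a - (r + 1)) := by
      have := rec' (a - (r + 1))
      rw [show a - (r + 1) + 2 = a - (r - 1) by ring, show a - (r + 1) + 1 = a - r by ring] at this
      exact this
    have er : f (r + 1) = f r + f (r - 1) := by
      have := rec' (r - 1)
      rw [show r - 1 + 2 = r + 1 by ring, show r - 1 + 1 = r by ring] at this
      exact this
    linear_combination i2 - i1 - f a * eb - ((-1:ℝ)) ^ (r - 1) * f b * ea + f (a + b) * er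

private lemma gibRepr (f : ℤ → ℝ) (h0 : f 0 = 0) (h1 : f 1 = 1)
    (hrec : ∀ n : ℤ, f n = f (n - 1) + f (n - 2))
    (G : ℤ → ℝ) (hG : ∀ n : ℤ, G n = G (n - 1) + G (n - 2)) :
    ∀ n : ℤ, G n = G 0 * f (n - 1) + G 1 * f n := by
  have rec' : ∀ n : ℤ, f (n + 2) = f (n + 1) + f n := by
    intro n
    have := hrec (n + 2)
    rw [show n + 2 - 1 = n + 1 by ring, show n + 2 - 2 = n by ring] at this
    exact this
  have grec' : ∀ n : ℤ, G (n + 2) = G (n + 1) + G n := by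
    intro n
    have := hG (n + 2)
    rw [show n + 2 - 1 = n + 1 by ring, show n + 2 - 2 = n by ring] at this
    exact this
  have hm1 : f (0 - 1) = 1 := by
    have := hrec 1
    rw [show (1:ℤ) - 1 = 0 by ring, show (1:ℤ) - 2 = 0 - 1 by ring, h0] at this
    linarith [h1]
  refine intPairInd ?_ ?_ ?_ ?_
  · rw [hm1, h0]; ring
  · rw [show (1:ℤ) - 1 = 0 by ring, h0, h1]; ring
  · intro n ih1 ih2
    have eg := grec' n
    have e1 : f (n + 2 - 1) = f (n + 1 - 1) + f (n - 1) := by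
      have := rec' (n - 1)
      rw [show n - 1 + 2 = n + 2 - 1 by ring, show n - 1 + 1 = n + 1 - 1 by ring] at this
      exact this
    have e2 : f (n + 2) = f (n + 1) + f n := rec' n
    linear_combination eg + ih1 + ih2 - G 0 * e1 - G 1 * e2
  · intro n ih1 ih2
    have eg : G (n + 1) = G n + G (n - 1) := by
      have := grec' (n - 1)
      rw [show n - 1 + 2 = n + 1 by ring, show n - 1 + 1 = n by ring] at this
      exact this
    have e1 : f (n + 1 - 1) = f (n - 1) + f (n - 1 - 1) := by
      have := rec' (n - 1 - 1)
      rw [show n - 1 - 1 + 2 = n + 1 - 1 by ring, show n - 1 - 1 + 1 = n - 1 by ring] at this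
      exact this
    have e2 : f (n + 1) = f n + f (n - 1) := by
      have := rec' (n - 1)
      rw [show n - 1 + 2 = n + 1 by ring, show n - 1 + 1 = n by ring] at this
      exact this
    linear_combination ih2 - ih1 - eg + G 0 * e1 + G 1 * e2

/-- a generalization of Howard's identity to two gibonacci
sequences. -/
theorem statement15 (F : ℤ → ℤ)
    (hF0 : F 0 = 0) (hF1 : F 1 = 1) (hF : ∀ n : ℤ, F n = F (n - 1) + F (n - 2))
    (G H : ℤ → ℝ)
    (hG : ∀ n : ℤ, G n = G (n - 1) + G (n - 2))
    (hH : ∀ n : ℤ, H n = H (n - 1) + H (n - 2))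
    (r s k : ℤ) :
    H s * G (k + r) + (-1 : ℝ) ^ (r - 1) * H (s - r) * G k =
      (F r : ℝ) * (G 0 * H (k + s - 1) + G 1 * H (k + s)) := by
  have f0 : ((F 0 : ℝ)) = 0 := by exact_mod_cast congrArg Int.cast hF0
  have f1 : ((F 1 : ℝ)) = 1 := by exact_mod_cast congrArg Int.cast hF1
  have frec : ∀ n : ℤ, ((F n : ℝ)) = (F (n - 1) : ℝ) + (F (n - 2) : ℝ) := by
    intro n; exact_mod_cast congrArg Int.cast (hF n)
  have grepr := gibRepr (fun n => ((F n : ℝ))) f0 f1 frec G hG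
  have hrepr := gibRepr (fun n => ((F n : ℝ))) f0 f1 frec H hH
  have V := fibVajda (fun n => ((F n : ℝ))) f0 f1 frec
  have v1 := V r s k
  have v2 := V r s (k - 1)
  have v3 := V r (s - 1) k
  have v4 := V r (s - 1) (k - 1)
  rw [show s + k = k + s by ring] at v1
  rw [show k - 1 + r = k + r - 1 by ring, show s + (k - 1) = k + s - 1 by ring] at v2
  rw [show s - 1 - r = s - r - 1 by ring, show s - 1 + k = k + s - 1 by ring] at v3
  rw [show k - 1 + r = k + r - 1 by ring, show s - 1 - r = s - r - 1 by ring,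
    show s - 1 + (k - 1) = k + s - 1 - 1 by ring] at v4
  rw [grepr (k + r), grepr k, hrepr s, hrepr (s - r), hrepr (k + s - 1), hrepr (k + s)]
  linear_combination G 1 * H 1 * v1 + G 0 * H 1 * v2 + G 1 * H 0 * v3 + G 0 * H 0 * v4
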